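/- Let a < b be real numbers and let J_1, ..., J_k be pairwise disjoint intervals whose union is [a,b]. For each s \in [k], let h_s : [a,b] \to \mathbb{R} be Borel measurable, of bounded variation on [a,b] with total variation V_a^b(h_s) \le V, and bounded with \sup_{x \in [a,b]} |h_s(x)| \le M. Define g(x) = \sum_{s=1}^k 1[x \in J_s] \cdot h_s(x) for x \in [a,b]. Then for any Borel probability measures P and Q on \mathbb{R} with P([a,b]) = Q([a,b]) = 1, |\int_{[a,b]} g \, dP - \int_{[a,b]} g \, dQ| \le k (2M + V) \cdot d_{KS}(P, Q). -/

import Mathlib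

open MeasureTheory Set

lemma aux_toReal_prob_le_one (P : Measure ℝ) [IsProbabilityMeasure P] (S : Set ℝ) :
    (P S).toReal ≤ 1 := by
  have h := prob_le_one (μ := P) (s := S)
  have := ENNReal.toReal_mono (by simp) h
  simpa using this

lemma aux_compl_toReal (P : Measure ℝ) [IsProbabilityMeasure P] {S : Set ℝ}
    (hS : MeasurableSet S) : (P Sᶜ).toReal = 1 - (P S).toReal := by
  rw [prob_compl_eq_one_sub hS]
  rw [ENNReal.toReal_sub_of_le (prob_le_one) (by simp)]
  simp

lemma aux_compl_null (a b : ℝ) (P : Measure ℝ) [IsProbabilityMeasure P]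
    (hP : P (Set.Icc a b) = 1) : P (Set.Icc a b)ᶜ = 0 := by
  rw [prob_compl_eq_one_sub measurableSet_Icc, hP, tsub_self]

lemma aux_inter (a b : ℝ) (P : Measure ℝ) (hc : P (Set.Icc a b)ᶜ = 0) (S : Set ℝ) :
    P (S ∩ Set.Icc a b) = P S := by
  refine le_antisymm (measure_mono inter_subset_left) ?_
  calc P S ≤ P ((S ∩ Set.Icc a b) ∪ (Set.Icc a b)ᶜ) := by
        refine measure_mono fun x hx => ?_
        by_cases hx2 : x ∈ Set.Icc a b
        · exact Or.inl ⟨hx, hx2⟩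
        · exact Or.inr hx2
    _ ≤ P (S ∩ Set.Icc a b) + P (Set.Icc a b)ᶜ := measure_union_le _ _
    _ = P (S ∩ Set.Icc a b) := by rw [hc, add_zero]

lemma aux_Iio_le (P Q : Measure ℝ) [IsProbabilityMeasure P] [IsProbabilityMeasure Q]
    (D : ℝ) (hD : ∀ x : ℝ, |(P (Set.Iic x)).toReal - (Q (Set.Iic x)).toReal| ≤ D) (x : ℝ) :
    |(P (Set.Iio x)).toReal - (Q (Set.Iio x)).toReal| ≤ D := by
  set u : ℕ → Set ℝ := fun n => Set.Iic (x - 1/(n+1)) with hu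
  have hmono : Monotone u := by
    intro n m hnm
    apply Iic_subset_Iic.2
    have h1 : (1:ℝ)/(m+1) ≤ 1/(n+1) := by
      apply one_div_le_one_div_of_le (by positivity)
      have : (n:ℝ) ≤ m := Nat.cast_le.2 hnm
      linarith
    linarith
  have hU : (⋃ n, u n) = Set.Iio x := by
    ext y
    simp only [mem_iUnion, hu, mem_Iic, mem_Iio]
    constructor
    · rintro ⟨n, hn⟩
      have : (0:ℝ) < 1/(n+1) := by positivity
      linarith
    · intro hy
      obtain ⟨n, hn⟩ := exists_nat_one_div_lt (show (0:ℝ) < x - y by linarith)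
      exact ⟨n, by linarith⟩
  have hPt : Filter.Tendsto (fun n => (P (u n)).toReal) Filter.atTop
      (nhds (P (Set.Iio x)).toReal) := by
    rw [← hU]
    exact (ENNReal.tendsto_toReal (measure_ne_top P _)).comp (tendsto_measure_iUnion_atTop hmono)
  have hQt : Filter.Tendsto (fun n => (Q (u n)).toReal) Filter.atTop
      (nhds (Q (Set.Iio x)).toReal) := by
    rw [← hU]
    exact (ENNReal.tendsto_toReal (measure_ne_top Q _)).comp (tendsto_measure_iUnion_atTop hmono)
  exact le_of_tendsto ((hPt.sub hQt).abs) (Filter.Eventually.of_forall fun n => hD _)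

lemma aux_monotone_bound (a b : ℝ) (hab : a ≤ b) (m : ℝ → ℝ) (hm : Monotone m)
    (P Q : Measure ℝ) [IsProbabilityMeasure P] [IsProbabilityMeasure Q]
    (hP : P (Set.Icc a b) = 1) (hQ : Q (Set.Icc a b) = 1)
    (hPc : P (Set.Icc a b)ᶜ = 0) (hQc : Q (Set.Icc a b)ᶜ = 0)
    (D : ℝ) (hD : ∀ x : ℝ, |(P (Set.Iic x)).toReal - (Q (Set.Iic x)).toReal| ≤ D)
    (hD' : ∀ x : ℝ, |(P (Set.Iio x)).toReal - (Q (Set.Iio x)).toReal| ≤ D) :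
    |(∫ x in Set.Icc a b, m x ∂P) - ∫ x in Set.Icc a b, m x ∂Q| ≤ (m b - m a) * D := by
  have hD0 : 0 ≤ D := le_trans (abs_nonneg _) (hD 0)
  set R : ℝ := m b - m a with hR
  have hR0 : 0 ≤ R := by have := hm hab; simp [hR]; linarith
  set f : ℝ → ℝ := fun x => m x - m a with hf
  have hfm : Measurable f := (hm.measurable).sub measurable_const
  have hfmono : Monotone f := fun x y hxy => by simp [hf]; exact hm hxy
  -- instances
  haveI hPprob : IsProbabilityMeasure (P.restrict (Set.Icc a b)) :=
    ⟨by rw [Measure.restrict_apply_univ, hP]⟩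
  haveI hQprob : IsProbabilityMeasure (Q.restrict (Set.Icc a b)) :=
    ⟨by rw [Measure.restrict_apply_univ, hQ]⟩
  -- integrability and nonnegativity of f on the restricted measures
  have hbound : ∀ (μ : Measure ℝ), μ (Set.Icc a b)ᶜ = 0 →
      (∀ᵐ x ∂(μ.restrict (Set.Icc a b)), ‖f x‖ ≤ R) := by
    intro μ hμc
    refine (ae_restrict_iff' measurableSet_Icc).2 (Filter.Eventually.of_forall ?_)
    intro x hx
    have h1 : m a ≤ m x := hm hx.1
    have h2 : m x ≤ m b := hm hx.2
    rw [Real.norm_eq_abs, abs_le]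
    constructor <;> simp [hf, hR] <;> linarith
  have hnn : ∀ (μ : Measure ℝ), (0 : ℝ → ℝ) ≤ᵐ[μ.restrict (Set.Icc a b)] f := by
    intro μ
    refine (ae_restrict_iff' measurableSet_Icc).2 (Filter.Eventually.of_forall ?_)
    intro x hx
    have h1 : m a ≤ m x := hm hx.1
    simp [hf]; linarith
  have hint : ∀ (μ : Measure ℝ) [IsFiniteMeasure (μ.restrict (Set.Icc a b))],
      μ (Set.Icc a b)ᶜ = 0 → Integrable f (μ.restrict (Set.Icc a b)) := by
    intro μ _ hμc
    exact Integrable.mono' (integrable_const R) hfm.aestronglyMeasurable (hbound μ hμc)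
  -- layer cake
  have hlcP := (hint P hPc).integral_eq_integral_meas_lt (hnn P)
  have hlcQ := (hint Q hQc).integral_eq_integral_meas_lt (hnn Q)
  set p : ℝ → ℝ := fun t => ((P.restrict (Set.Icc a b)) {x | t < f x}).toReal with hp
  set q : ℝ → ℝ := fun t => ((Q.restrict (Set.Icc a b)) {x | t < f x}).toReal with hq
  have hUmeas : ∀ t : ℝ, MeasurableSet {x : ℝ | t < f x} := fun t =>
    measurableSet_lt measurable_const hfm
  -- vanish beyond R
  have hvanish : ∀ (μ : Measure ℝ) (t : ℝ), R ≤ t →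
      ((μ.restrict (Set.Icc a b)) {x | t < f x}).toReal = 0 := by
    intro μ t ht
    rw [Measure.restrict_apply (hUmeas t)]
    have : {x : ℝ | t < f x} ∩ Set.Icc a b = ∅ := by
      ext x
      simp only [mem_inter_iff, mem_setOf_eq, mem_empty_iff_false, iff_false, not_and]
      intro hlt hx
      have : m x ≤ m b := hm hx.2
      simp [hf] at hlt
      linarith
    rw [this]; simp
  -- the key estimate for each t > 0
  have hkey : ∀ t : ℝ, 0 < t → |p t - q t| ≤ D := by
    intro t ht
    have hpt : p t = (P ({x | t < f x} ∩ Set.Icc a b)).toReal := by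
      simp only [hp, Measure.restrict_apply (hUmeas t)]
    have hqt : q t = (Q ({x | t < f x} ∩ Set.Icc a b)).toReal := by
      simp only [hq, Measure.restrict_apply (hUmeas t)]
    set U : Set ℝ := {x | t < f x} with hUdef
    have hup : ∀ ⦃x y : ℝ⦄, x ∈ U → x ≤ y → y ∈ U := by
      intro x y hx hxy
      exact lt_of_lt_of_le hx (hfmono hxy)
    rcases eq_empty_or_nonempty U with hUe | hUne
    · rw [hpt, hqt, hUe]; simp [hD0]
    by_cases hUu : U = univ
    · rw [hpt, hqt, hUu, univ_inter, hP, hQ]; simp [hD0]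
    -- U is a proper nonempty upper set, hence Ioi c₀ or Ici c₀
    obtain ⟨y, hy⟩ : ∃ y, y ∉ U := by
      by_contra hcon
      push_neg at hcon
      exact hUu (eq_univ_of_forall hcon)
    have hbdd : BddBelow U := by
      refine ⟨y, fun z hz => ?_⟩
      by_contra hzy
      exact hy (hup hz (le_of_lt (not_le.1 hzy)))
    set c0 : ℝ := sInf U with hc0
    have hIoi : Set.Ioi c0 ⊆ U := by
      intro z hz
      obtain ⟨u0, hu0, hu0z⟩ := exists_lt_of_csInf_lt hUne hz
      exact hup hu0 hu0z.le
    have hIci : U ⊆ Set.Ici c0 := fun z hz => csInf_le hbdd hz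
    have hinterP : P (U ∩ Set.Icc a b) = P U := aux_inter a b P hPc U
    have hinterQ : Q (U ∩ Set.Icc a b) = Q U := aux_inter a b Q hQc U
    by_cases hc0U : c0 ∈ U
    · have hUeq : U = Set.Ici c0 := by
        refine subset_antisymm hIci (fun z hz => ?_)
        rcases eq_or_lt_of_le (mem_Ici.1 hz) with hzz | hzz
        · rwa [← hzz]
        · exact hIoi hzz
      rw [hpt, hqt, hinterP, hinterQ, hUeq]
      have hPI : (P (Set.Ici c0)).toReal = 1 - (P (Set.Iio c0)).toReal := by
        rw [← compl_Iio]
        exact aux_compl_toReal P measurableSet_Iio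
      have hQI : (Q (Set.Ici c0)).toReal = 1 - (Q (Set.Iio c0)).toReal := by
        rw [← compl_Iio]
        exact aux_compl_toReal Q measurableSet_Iio
      rw [hPI, hQI]
      have := hD' c0
      rw [abs_sub_comm] at this
      calc |1 - (P (Set.Iio c0)).toReal - (1 - (Q (Set.Iio c0)).toReal)|
          = |(Q (Set.Iio c0)).toReal - (P (Set.Iio c0)).toReal| := by ring_nf
        _ ≤ D := this
    · have hUeq : U = Set.Ioi c0 := by
        refine subset_antisymm (fun z hz => ?_) hIoi
        rcases eq_or_lt_of_le (mem_Ici.1 (hIci hz)) with hzz | hzz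
        · exact absurd (hzz ▸ hz) hc0U
        · exact hzz
      rw [hpt, hqt, hinterP, hinterQ, hUeq]
      have hPI : (P (Set.Ioi c0)).toReal = 1 - (P (Set.Iic c0)).toReal := by
        rw [← compl_Iic]
        exact aux_compl_toReal P measurableSet_Iic
      have hQI : (Q (Set.Ioi c0)).toReal = 1 - (Q (Set.Iic c0)).toReal := by
        rw [← compl_Iic]
        exact aux_compl_toReal Q measurableSet_Iic
      rw [hPI, hQI]
      have := hD c0
      rw [abs_sub_comm] at this
      calc |1 - (P (Set.Iic c0)).toReal - (1 - (Q (Set.Iic c0)).toReal)|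
          = |(Q (Set.Iic c0)).toReal - (P (Set.Iic c0)).toReal| := by ring_nf
        _ ≤ D := this
  -- p and q are antitone, hence measurable; bounded by 1, hence integrable on Ioc 0 R
  have hanti : ∀ (μ : Measure ℝ) [IsFiniteMeasure (μ.restrict (Set.Icc a b))],
      Antitone (fun t => ((μ.restrict (Set.Icc a b)) {x | t < f x}).toReal) := by
    intro μ _ t t' htt'
    apply ENNReal.toReal_mono (measure_ne_top _ _)
    exact measure_mono (fun x hx => lt_of_le_of_lt htt' hx)
  have hpmeas : Measurable p := (hanti P).measurable
  have hqmeas : Measurable q := (hanti Q).measurable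
  have hple1 : ∀ (μ : Measure ℝ) [IsProbabilityMeasure (μ.restrict (Set.Icc a b))] (t : ℝ),
      ‖((μ.restrict (Set.Icc a b)) {x | t < f x}).toReal‖ ≤ 1 := by
    intro μ _ t
    rw [Real.norm_eq_abs, abs_of_nonneg ENNReal.toReal_nonneg]
    exact aux_toReal_prob_le_one _ _
  have hpint : IntegrableOn p (Set.Ioc 0 R) := by
    refine Integrable.mono' (integrable_const 1) hpmeas.aestronglyMeasurable ?_
    exact Filter.Eventually.of_forall (fun t => hple1 P t)
  have hqint : IntegrableOn q (Set.Ioc 0 R) := by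
    refine Integrable.mono' (integrable_const 1) hqmeas.aestronglyMeasurable ?_
    exact Filter.Eventually.of_forall (fun t => hple1 Q t)
  -- reduce integral over Ioi 0 to Ioc 0 R
  have hsplit : ∀ (r : ℝ → ℝ), Measurable r → IntegrableOn r (Set.Ioc 0 R) →
      (∀ t, R ≤ t → r t = 0) →
      (∫ t in Set.Ioi (0:ℝ), r t) = ∫ t in Set.Ioc 0 R, r t := by
    intro r hrm hrint hrz
    have hun : Set.Ioc (0:ℝ) R ∪ Set.Ioi R = Set.Ioi 0 := Set.Ioc_union_Ioi_eq_Ioi hR0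
    rw [← hun]
    have hz2 : ∀ t ∈ Set.Ioi R, r t = 0 := fun t ht => hrz t (le_of_lt ht)
    rw [setIntegral_union (Set.Ioc_disjoint_Ioi le_rfl) measurableSet_Ioi hrint ?hint2]
    · rw [setIntegral_congr_fun measurableSet_Ioi hz2]
      simp
    case hint2 =>
      apply IntegrableOn.congr_fun (integrableOn_zero) (fun t ht => (hz2 t ht).symm) measurableSet_Ioi
  have hps : (∫ t in Set.Ioi (0:ℝ), p t) = ∫ t in Set.Ioc 0 R, p t :=
    hsplit p hpmeas hpint (fun t ht => hvanish P t ht)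
  have hqs : (∫ t in Set.Ioi (0:ℝ), q t) = ∫ t in Set.Ioc 0 R, q t :=
    hsplit q hqmeas hqint (fun t ht => hvanish Q t ht)
  -- express the original integrals
  have hfin : ∀ (μ : Measure ℝ) [IsProbabilityMeasure (μ.restrict (Set.Icc a b))],
      μ (Set.Icc a b)ᶜ = 0 →
      (∫ x in Set.Icc a b, m x ∂μ) = (∫ x in Set.Icc a b, f x ∂μ) + m a := by
    intro μ _ hμc
    have : (∫ x in Set.Icc a b, m x ∂μ) = ∫ x in Set.Icc a b, (f x + m a) ∂μ := by
      apply integral_congr_ae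
      exact Filter.Eventually.of_forall (fun x => by simp [hf])
    rw [this, integral_add (hint μ hμc) (integrable_const _), integral_const]
    have : (μ.restrict (Set.Icc a b)).real univ = 1 := by simp
    rw [this]
    simp
  rw [hfin P hPc, hfin Q hQc, hlcP, hlcQ]
  change |(∫ t in Set.Ioi (0:ℝ), p t) + m a - ((∫ t in Set.Ioi (0:ℝ), q t) + m a)| ≤ R * D
  rw [hps, hqs]
  have heq : (∫ t in Set.Ioc 0 R, p t) + m a - ((∫ t in Set.Ioc 0 R, q t) + m a)
      = ∫ t in Set.Ioc 0 R, (p t - q t) := by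
    rw [integral_sub hpint hqint]; ring
  rw [heq]
  have hnorm : ‖∫ t in Set.Ioc 0 R, (p t - q t)‖ ≤ D * ((volume (Set.Ioc 0 R)).toReal) := by
    apply norm_setIntegral_le_of_norm_le_const (by exact measure_Ioc_lt_top)
    · intro t ht
      rw [Real.norm_eq_abs]
      exact hkey t ht.1
  rw [Real.volume_Ioc, ENNReal.toReal_ofReal (by linarith)] at hnorm
  rw [Real.norm_eq_abs] at hnorm
  calc |∫ t in Set.Ioc 0 R, (p t - q t)| ≤ D * (R - 0) := hnorm
    _ = R * D := by ring


lemma aux_abs_le_vft {h : ℝ → ℝ} {s : Set ℝ} (hf : LocallyBoundedVariationOn h s)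
    {x y : ℝ} (hx : x ∈ s) (hy : y ∈ s) (hxy : x ≤ y) :
    |h y - h x| ≤ variationOnFromTo h s x y := by
  rw [variationOnFromTo.eq_of_le h s hxy]
  have h1 : edist (h x) (h y) ≤ eVariationOn h (s ∩ Set.Icc x y) :=
    eVariationOn.edist_le h ⟨hx, le_rfl, hxy⟩ ⟨hy, hxy, le_rfl⟩
  have h2 := ENNReal.toReal_mono (hf x y hx hy) h1
  rwa [edist_dist, ENNReal.toReal_ofReal dist_nonneg, Real.dist_eq, abs_sub_comm] at h2

lemma aux_per_interval (a b : ℝ) (hab : a < b) (J : Set ℝ) (hJoc : J.OrdConnected)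
    (hJsub : J ⊆ Set.Icc a b)
    (h : ℝ → ℝ) (hmeas : Measurable h) (hBV : BoundedVariationOn h (Set.Icc a b))
    (V M : ℝ) (hV : (eVariationOn h (Set.Icc a b)).toReal ≤ V)
    (hM : ∀ x ∈ Set.Icc a b, |h x| ≤ M)
    (P Q : Measure ℝ) [IsProbabilityMeasure P] [IsProbabilityMeasure Q]
    (hP : P (Set.Icc a b) = 1) (hQ : Q (Set.Icc a b) = 1)
    (hPc : P (Set.Icc a b)ᶜ = 0) (hQc : Q (Set.Icc a b)ᶜ = 0)
    (D : ℝ) (hD : ∀ x : ℝ, |(P (Set.Iic x)).toReal - (Q (Set.Iic x)).toReal| ≤ D)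
    (hD' : ∀ x : ℝ, |(P (Set.Iio x)).toReal - (Q (Set.Iio x)).toReal| ≤ D) :
    |(∫ x in Set.Icc a b, J.indicator h x ∂P) - ∫ x in Set.Icc a b, J.indicator h x ∂Q|
      ≤ (2*M + V) * D := by
  have hD0 : 0 ≤ D := le_trans (abs_nonneg _) (hD 0)
  have hM0 : 0 ≤ M := le_trans (abs_nonneg _) (hM a ⟨le_rfl, hab.le⟩)
  have hV0 : 0 ≤ V := le_trans ENNReal.toReal_nonneg hV
  rcases Set.eq_empty_or_nonempty J with hJe | hJne
  · rw [hJe]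
    simp only [Set.indicator_empty, integral_zero, sub_zero, abs_zero]
    have : 0 ≤ 2*M + V := by linarith
    exact mul_nonneg this hD0
  obtain ⟨x0, hx0⟩ := hJne
  have hJne : J.Nonempty := ⟨x0, hx0⟩
  have hbddb : BddBelow J := ⟨a, fun z hz => (hJsub hz).1⟩
  have hbdda : BddAbove J := ⟨b, fun z hz => (hJsub hz).2⟩
  set c := sInf J with hcdef
  set d := sSup J with hddef
  have hcJ : ∀ z ∈ J, c ≤ z := fun z hz => csInf_le hbddb hz
  have hdJ : ∀ z ∈ J, z ≤ d := fun z hz => le_csSup hbdda hz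
  have hac : a ≤ c := le_csInf hJne (fun z hz => (hJsub hz).1)
  have hdb : d ≤ b := csSup_le hJne (fun z hz => (hJsub hz).2)
  have hcd : c ≤ d := (hcJ x0 hx0).trans (hdJ x0 hx0)
  have hcb : c ≤ b := hcd.trans hdb
  have had : a ≤ d := hac.trans hcd
  have hcI : c ∈ Set.Icc a b := ⟨hac, hcb⟩
  have hdI : d ∈ Set.Icc a b := ⟨had, hdb⟩
  have haI : a ∈ Set.Icc a b := ⟨le_rfl, hab.le⟩
  have hbI : b ∈ Set.Icc a b := ⟨hab.le, le_rfl⟩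
  have hIoo : Set.Ioo c d ⊆ J := by
    intro z hz
    obtain ⟨z1, hz1, hz1'⟩ := exists_lt_of_csInf_lt hJne hz.1
    obtain ⟨z2, hz2, hz2'⟩ := exists_lt_of_lt_csSup hJne hz.2
    exact hJoc.out hz1 hz2 ⟨hz1'.le, hz2'.le⟩
  have hxJlt : ∀ x, x < c → x ∉ J := fun x hx hxJ => absurd (hcJ x hxJ) (not_le.2 hx)
  have hxJgt : ∀ x, d < x → x ∉ J := fun x hx hxJ => absurd (hdJ x hxJ) (not_le.2 hx)
  -- Jordan-type decomposition
  have LBV : LocallyBoundedVariationOn h (Set.Icc a b) := hBV.locallyBoundedVariationOn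
  set v : ℝ → ℝ := fun x => variationOnFromTo h (Set.Icc a b) a x with hv
  set p : ℝ → ℝ := fun x => (v x + h x)/2 with hpdef
  set q : ℝ → ℝ := fun x => (v x - h x)/2 with hqdef
  have habs : ∀ x ∈ Set.Icc a b, ∀ y ∈ Set.Icc a b, x ≤ y → |h y - h x| ≤ v y - v x := by
    intro x hx y hy hxy
    have h1 := aux_abs_le_vft LBV hx hy hxy
    have h2 : v x + variationOnFromTo h (Set.Icc a b) x y = v y :=
      variationOnFromTo.add LBV haI hx hy
    linarith
  have hpm : MonotoneOn p (Set.Icc a b) := by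
    intro x hx y hy hxy
    have h1 := abs_le.1 (habs x hx y hy hxy)
    simp only [hpdef]
    linarith [h1.1, h1.2]
  have hqm : MonotoneOn q (Set.Icc a b) := by
    intro x hx y hy hxy
    have h1 := abs_le.1 (habs x hx y hy hxy)
    simp only [hqdef]
    linarith [h1.1, h1.2]
  have hpq : ∀ x, p x - q x = h x := by
    intro x; simp only [hpdef, hqdef]; ring
  -- clamp to [a,b] and extend monotonically
  set cl : ℝ → ℝ := fun x => max a (min x b) with hcl
  have hclmem : ∀ x, cl x ∈ Set.Icc a b :=
    fun x => ⟨le_max_left _ _, max_le hab.le (min_le_right _ _)⟩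
  have hclmono : Monotone cl :=
    fun x y hxy => max_le_max le_rfl (min_le_min hxy le_rfl)
  have hclid : ∀ x ∈ Set.Icc a b, cl x = x := by
    intro x hx
    simp only [hcl]
    rw [min_eq_left hx.2, max_eq_right hx.1]
  set pt : ℝ → ℝ := fun x => p (cl x) with hptdef
  set qt : ℝ → ℝ := fun x => q (cl x) with hqtdef
  have hptm : Monotone pt := fun x y hxy => hpm (hclmem x) (hclmem y) (hclmono hxy)
  have hqtm : Monotone qt := fun x y hxy => hqm (hclmem x) (hclmem y) (hclmono hxy)
  have hpt_eq : ∀ x ∈ Set.Icc a b, pt x = p x := by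
    intro x hx; simp only [hptdef]; rw [hclid x hx]
  have hqt_eq : ∀ x ∈ Set.Icc a b, qt x = q x := by
    intro x hx; simp only [hqtdef]; rw [hclid x hx]
  set φp : ℝ → ℝ := fun x => min (max (pt x) (pt c)) (pt d) with hφp
  set φq : ℝ → ℝ := fun x => min (max (qt x) (qt c)) (qt d) with hφq
  have hφpm : Monotone φp := (hptm.max monotone_const).min monotone_const
  have hφqm : Monotone φq := (hqtm.max monotone_const).min monotone_const
  have hptc : pt c = p c := hpt_eq c hcI
  have hptd : pt d = p d := hpt_eq d hdI
  have hqtc : qt c = q c := hqt_eq c hcI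
  have hqtd : qt d = q d := hqt_eq d hdI
  have hpcd : p c ≤ p d := hpm hcI hdI hcd
  have hqcd : q c ≤ q d := hqm hcI hdI hcd
  -- lower-cut sets at d and c
  obtain ⟨Dl, hDlm, hDlb, hDlmem⟩ :
      ∃ S : Set ℝ, MeasurableSet S ∧ |(P S).toReal - (Q S).toReal| ≤ D ∧
        (∀ x : ℝ, x ∈ S ↔ (x < d ∨ (x = d ∧ d ∈ J))) := by
    by_cases hd : d ∈ J
    · exact ⟨Set.Iic d, measurableSet_Iic, hD d, fun x => by
        simp only [Set.mem_Iic, le_iff_lt_or_eq, hd, and_true]⟩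
    · exact ⟨Set.Iio d, measurableSet_Iio, hD' d, fun x => by
        simp only [Set.mem_Iio, hd, and_false, or_false]⟩
  obtain ⟨Cl, hClm, hClb, hClmem⟩ :
      ∃ S : Set ℝ, MeasurableSet S ∧ |(P S).toReal - (Q S).toReal| ≤ D ∧
        (∀ x : ℝ, x ∈ S ↔ (x < c ∨ (x = c ∧ c ∉ J))) := by
    by_cases hc : c ∈ J
    · exact ⟨Set.Iio c, measurableSet_Iio, hD' c, fun x => by
        simp only [Set.mem_Iio, hc, not_true, and_false, or_false]⟩
    · exact ⟨Set.Iic c, measurableSet_Iic, hD c, fun x => by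
        simp only [Set.mem_Iic, le_iff_lt_or_eq, hc, not_false_iff, and_true]⟩
  -- the pointwise identity
  have hid : ∀ x ∈ Set.Icc a b,
      J.indicator h x = φp x - φq x - h d
        + h d * Dl.indicator (fun _ => (1:ℝ)) x - h c * Cl.indicator (fun _ => (1:ℝ)) x := by
    intro x hx
    have hptx : pt x = p x := hpt_eq x hx
    have hqtx : qt x = q x := hqt_eq x hx
    rcases lt_trichotomy x c with hxc | hxc | hxc
    · -- x < c
      have hxJ : x ∉ J := hxJlt x hxc
      have hφpx : φp x = p c := by
        simp only [hφp, hptx, hptc, hptd]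
        rw [max_eq_right (hpm hx hcI hxc.le), min_eq_left hpcd]
      have hφqx : φq x = q c := by
        simp only [hφq, hqtx, hqtc, hqtd]
        rw [max_eq_right (hqm hx hcI hxc.le), min_eq_left hqcd]
      have hDlx : Dl.indicator (fun _ => (1:ℝ)) x = 1 :=
        Set.indicator_of_mem ((hDlmem x).2 (Or.inl (lt_of_lt_of_le hxc hcd))) _
      have hClx : Cl.indicator (fun _ => (1:ℝ)) x = 1 :=
        Set.indicator_of_mem ((hClmem x).2 (Or.inl hxc)) _
      rw [Set.indicator_of_notMem hxJ, hφpx, hφqx, hDlx, hClx]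
      have := hpq c
      linarith
    · -- x = c
      have hφpx : φp x = p c := by
        simp only [hφp, hptx, hptc, hptd, hxc]
        rw [max_self, min_eq_left hpcd]
      have hφqx : φq x = q c := by
        simp only [hφq, hqtx, hqtc, hqtd, hxc]
        rw [max_self, min_eq_left hqcd]
      by_cases hcJ2 : c ∈ J
      · have hxJ : x ∈ J := hxc ▸ hcJ2
        have hDlx : Dl.indicator (fun _ => (1:ℝ)) x = 1 := by
          refine Set.indicator_of_mem ((hDlmem x).2 ?_) _
          rcases eq_or_lt_of_le hcd with he | hlt
          · exact Or.inr ⟨hxc.trans he, he ▸ hcJ2⟩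
          · exact Or.inl (hxc ▸ hlt)
        have hClx : Cl.indicator (fun _ => (1:ℝ)) x = 0 := by
          refine Set.indicator_of_notMem (fun hmem => ?_) _
          rcases (hClmem x).1 hmem with h1 | h1
          · exact absurd (hxc ▸ h1) (lt_irrefl c)
          · exact h1.2 hcJ2
        rw [Set.indicator_of_mem hxJ, hφpx, hφqx, hDlx, hClx]
        have := hpq c
        rw [hxc]
        linarith
      · have hxJ : x ∉ J := hxc ▸ hcJ2
        have hclt : c < d := by
          rcases eq_or_lt_of_le hcd with he | hlt
          · exfalso
            apply hcJ2
            have : x0 = c := le_antisymm (he ▸ hdJ x0 hx0) (hcJ x0 hx0)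
            exact this ▸ hx0
          · exact hlt
        have hDlx : Dl.indicator (fun _ => (1:ℝ)) x = 1 :=
          Set.indicator_of_mem ((hDlmem x).2 (Or.inl (hxc ▸ hclt))) _
        have hClx : Cl.indicator (fun _ => (1:ℝ)) x = 1 :=
          Set.indicator_of_mem ((hClmem x).2 (Or.inr ⟨hxc, hcJ2⟩)) _
        rw [Set.indicator_of_notMem hxJ, hφpx, hφqx, hDlx, hClx]
        have := hpq c
        linarith
    · -- c < x
      rcases lt_trichotomy x d with hxd | hxd | hxd
      · -- c < x < d
        have hxJ : x ∈ J := hIoo ⟨hxc, hxd⟩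
        have hφpx : φp x = p x := by
          simp only [hφp, hptx, hptc, hptd]
          rw [max_eq_left (hpm hcI hx hxc.le), min_eq_left (hpm hx hdI hxd.le)]
        have hφqx : φq x = q x := by
          simp only [hφq, hqtx, hqtc, hqtd]
          rw [max_eq_left (hqm hcI hx hxc.le), min_eq_left (hqm hx hdI hxd.le)]
        have hDlx : Dl.indicator (fun _ => (1:ℝ)) x = 1 :=
          Set.indicator_of_mem ((hDlmem x).2 (Or.inl hxd)) _
        have hClx : Cl.indicator (fun _ => (1:ℝ)) x = 0 := by
          refine Set.indicator_of_notMem (fun hmem => ?_) _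
          rcases (hClmem x).1 hmem with h1 | h1
          · exact absurd h1 (not_lt.2 hxc.le)
          · exact absurd h1.1 (ne_of_gt hxc)
        rw [Set.indicator_of_mem hxJ, hφpx, hφqx, hDlx, hClx]
        have := hpq x
        linarith
      · -- x = d, c < x
        have hφpx : φp x = p d := by
          simp only [hφp, hptx, hptc, hptd, hxd]
          rw [max_eq_left hpcd, min_self]
        have hφqx : φq x = q d := by
          simp only [hφq, hqtx, hqtc, hqtd, hxd]
          rw [max_eq_left hqcd, min_self]
        have hClx : Cl.indicator (fun _ => (1:ℝ)) x = 0 := by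
          refine Set.indicator_of_notMem (fun hmem => ?_) _
          rcases (hClmem x).1 hmem with h1 | h1
          · exact absurd h1 (not_lt.2 hxc.le)
          · exact absurd h1.1 (ne_of_gt hxc)
        by_cases hdJ2 : d ∈ J
        · have hxJ : x ∈ J := hxd ▸ hdJ2
          have hDlx : Dl.indicator (fun _ => (1:ℝ)) x = 1 :=
            Set.indicator_of_mem ((hDlmem x).2 (Or.inr ⟨hxd, hdJ2⟩)) _
          rw [Set.indicator_of_mem hxJ, hφpx, hφqx, hDlx, hClx]
          have := hpq d
          rw [hxd]
          linarith
        · have hxJ : x ∉ J := hxd ▸ hdJ2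
          have hDlx : Dl.indicator (fun _ => (1:ℝ)) x = 0 := by
            refine Set.indicator_of_notMem (fun hmem => ?_) _
            rcases (hDlmem x).1 hmem with h1 | h1
            · exact absurd (hxd ▸ h1) (lt_irrefl d)
            · exact hdJ2 h1.2
          rw [Set.indicator_of_notMem hxJ, hφpx, hφqx, hDlx, hClx]
          have := hpq d
          linarith
      · -- d < x
        have hxJ : x ∉ J := hxJgt x hxd
        have hφpx : φp x = p d := by
          simp only [hφp, hptx, hptc, hptd]
          rw [max_eq_left (hpm hcI hx hxc.le), min_eq_right (hpm hdI hx hxd.le)]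
        have hφqx : φq x = q d := by
          simp only [hφq, hqtx, hqtc, hqtd]
          rw [max_eq_left (hqm hcI hx hxc.le), min_eq_right (hqm hdI hx hxd.le)]
        have hDlx : Dl.indicator (fun _ => (1:ℝ)) x = 0 := by
          refine Set.indicator_of_notMem (fun hmem => ?_) _
          rcases (hDlmem x).1 hmem with h1 | h1
          · exact absurd h1 (not_lt.2 hxd.le)
          · exact absurd h1.1 (ne_of_gt hxd)
        have hClx : Cl.indicator (fun _ => (1:ℝ)) x = 0 := by
          refine Set.indicator_of_notMem (fun hmem => ?_) _
          rcases (hClmem x).1 hmem with h1 | h1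
          · exact absurd h1 (not_lt.2 (hcd.trans hxd.le))
          · exact absurd h1.1 (ne_of_gt (lt_of_le_of_lt hcd hxd))
        rw [Set.indicator_of_notMem hxJ, hφpx, hφqx, hDlx, hClx]
        have := hpq d
        linarith
  -- integrability facts
  have hφpint : ∀ (μ : Measure ℝ) [IsFiniteMeasure μ],
      Integrable φp (μ.restrict (Set.Icc a b)) := by
    intro μ _
    refine Integrable.mono' (integrable_const (|pt c| + |pt d|))
      hφpm.measurable.aestronglyMeasurable (Filter.Eventually.of_forall fun x => ?_)
    have h1 : pt c ≤ φp x := le_min (le_max_right _ _) (hptm hcd)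
    have h2 : φp x ≤ pt d := min_le_right _ _
    rw [Real.norm_eq_abs, abs_le]
    constructor
    · linarith [neg_abs_le (pt c), abs_nonneg (pt d)]
    · linarith [le_abs_self (pt d), abs_nonneg (pt c)]
  have hφqint : ∀ (μ : Measure ℝ) [IsFiniteMeasure μ],
      Integrable φq (μ.restrict (Set.Icc a b)) := by
    intro μ _
    refine Integrable.mono' (integrable_const (|qt c| + |qt d|))
      hφqm.measurable.aestronglyMeasurable (Filter.Eventually.of_forall fun x => ?_)
    have h1 : qt c ≤ φq x := le_min (le_max_right _ _) (hqtm hcd)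
    have h2 : φq x ≤ qt d := min_le_right _ _
    rw [Real.norm_eq_abs, abs_le]
    constructor
    · linarith [neg_abs_le (qt c), abs_nonneg (qt d)]
    · linarith [le_abs_self (qt d), abs_nonneg (qt c)]
  have hindint : ∀ (S : Set ℝ), MeasurableSet S → ∀ (μ : Measure ℝ) [IsFiniteMeasure μ],
      Integrable (fun x => S.indicator (fun _ => (1:ℝ)) x) (μ.restrict (Set.Icc a b)) := by
    intro S hS μ _
    refine Integrable.mono' (integrable_const 1)
      ((measurable_const.indicator hS).aestronglyMeasurable)
      (Filter.Eventually.of_forall fun x => ?_)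
    rw [Real.norm_eq_abs]
    by_cases hxS : x ∈ S
    · rw [Set.indicator_of_mem hxS]; simp
    · rw [Set.indicator_of_notMem hxS]; simp
  have hindval : ∀ (S : Set ℝ), MeasurableSet S → ∀ (μ : Measure ℝ), μ (Set.Icc a b)ᶜ = 0 →
      (∫ x in Set.Icc a b, S.indicator (fun _ => (1:ℝ)) x ∂μ) = (μ S).toReal := by
    intro S hS μ hμc
    rw [setIntegral_indicator hS, setIntegral_const, smul_eq_mul, mul_one,
      Set.inter_comm (Set.Icc a b) S, Measure.real, aux_inter a b μ hμc S]
  have hdecomp : ∀ (μ : Measure ℝ) [IsProbabilityMeasure μ], μ (Set.Icc a b)ᶜ = 0 →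
      μ (Set.Icc a b) = 1 →
      (∫ x in Set.Icc a b, J.indicator h x ∂μ)
        = (∫ x in Set.Icc a b, φp x ∂μ) - (∫ x in Set.Icc a b, φq x ∂μ) - h d
          + h d * (μ Dl).toReal - h c * (μ Cl).toReal := by
    intro μ _ hμc hμ1
    have i1 := hφpint μ
    have i2 := hφqint μ
    have i3 : Integrable (fun x => h d * Dl.indicator (fun _ => (1:ℝ)) x)
        (μ.restrict (Set.Icc a b)) := (hindint Dl hDlm μ).const_mul (h d)
    have i4 : Integrable (fun x => h c * Cl.indicator (fun _ => (1:ℝ)) x)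
        (μ.restrict (Set.Icc a b)) := (hindint Cl hClm μ).const_mul (h c)
    have i12 : Integrable (fun x => φp x - φq x) (μ.restrict (Set.Icc a b)) := i1.sub i2
    have i123 : Integrable (fun x => φp x - φq x - h d) (μ.restrict (Set.Icc a b)) :=
      i12.sub (integrable_const (h d))
    have i1234 : Integrable (fun x => φp x - φq x - h d + h d * Dl.indicator (fun _ => (1:ℝ)) x)
        (μ.restrict (Set.Icc a b)) := i123.add i3
    rw [setIntegral_congr_fun measurableSet_Icc hid]
    rw [integral_sub i1234 i4, integral_add i123 i3, integral_sub i12 (integrable_const (h d)),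
      integral_sub i1 i2, integral_const_mul, integral_const_mul,
      hindval Dl hDlm μ hμc, hindval Cl hClm μ hμc, integral_const]
    rw [Measure.real, Measure.restrict_apply_univ, hμ1]
    simp
  rw [hdecomp P hPc hP, hdecomp Q hQc hQ]
  -- the monotone bounds
  have hbp := aux_monotone_bound a b hab.le φp hφpm P Q hP hQ hPc hQc D hD hD'
  have hbq := aux_monotone_bound a b hab.le φq hφqm P Q hP hQ hPc hQc D hD hD'
  have hφpb : φp b = p d := by
    simp only [hφp, hpt_eq b hbI, hptc, hptd]
    rw [max_eq_left (hpm hcI hbI hcb), min_eq_right (hpm hdI hbI hdb)]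
  have hφpa : φp a = p c := by
    simp only [hφp, hpt_eq a haI, hptc, hptd]
    rw [max_eq_right (hpm haI hcI hac), min_eq_left hpcd]
  have hφqb : φq b = q d := by
    simp only [hφq, hqt_eq b hbI, hqtc, hqtd]
    rw [max_eq_left (hqm hcI hbI hcb), min_eq_right (hqm hdI hbI hdb)]
  have hφqa : φq a = q c := by
    simp only [hφq, hqt_eq a haI, hqtc, hqtd]
    rw [max_eq_right (hqm haI hcI hac), min_eq_left hqcd]
  rw [hφpb, hφpa] at hbp
  rw [hφqb, hφqa] at hbq
  -- variation bound
  have hvar : (p d - p c) + (q d - q c) ≤ V := by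
    have h1 : p d - p c + (q d - q c) = v d - v c := by simp only [hpdef, hqdef]; ring
    have h2 : 0 ≤ v c := variationOnFromTo.nonneg_of_le h (Set.Icc a b) hac
    have h3 : v d ≤ v b := variationOnFromTo.monotoneOn LBV haI hdI hbI hdb
    have h4 : v b ≤ V := by
      have h5 : v b = (eVariationOn h (Set.Icc a b ∩ Set.Icc a b)).toReal := by
        simp only [hv]
        exact variationOnFromTo.eq_of_le h (Set.Icc a b) hab.le
      rw [h5, Set.inter_self]
      exact hV
    linarith
  have hS : (p d - p c) * D + (q d - q c) * D ≤ V * D := by nlinarith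
  have habsd : |h d| ≤ M := hM d hdI
  have habsc : |h c| ≤ M := hM c hcI
  have e3 : |h d * ((P Dl).toReal - (Q Dl).toReal)| ≤ M * D := by
    rw [abs_mul]; exact mul_le_mul habsd hDlb (abs_nonneg _) hM0
  have e4 : |h c * ((P Cl).toReal - (Q Cl).toReal)| ≤ M * D := by
    rw [abs_mul]; exact mul_le_mul habsc hClb (abs_nonneg _) hM0
  have l1 := abs_le.1 hbp
  have l2 := abs_le.1 hbq
  have l3 := abs_le.1 e3
  have l4 := abs_le.1 e4
  have exp3 : h d * (P Dl).toReal - h d * (Q Dl).toReal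
      = h d * ((P Dl).toReal - (Q Dl).toReal) := by ring
  have exp4 : h c * (P Cl).toReal - h c * (Q Cl).toReal
      = h c * ((P Cl).toReal - (Q Cl).toReal) := by ring
  have hfin : M * D + M * D + V * D = (2*M + V) * D := by ring
  rw [abs_le]
  constructor <;>
    linarith [l1.1, l1.2, l2.1, l2.2, l3.1, l3.2, l4.1, l4.2, hS, hfin, exp3, exp4]


/-- Let `J_1, …, J_k` be pairwise disjoint intervals whose union is
`[a,b]`, and for each `s` let `h_s : [a,b] → ℝ` be Borel measurable, of bounded variation
with total variation at most `V`, and bounded by `M`. For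
`g x = ∑_s 1[x ∈ J_s] · h_s x` and Borel probability measures `P, Q` concentrated on
`[a,b]`, `|∫_{[a,b]} g dP - ∫_{[a,b]} g dQ| ≤ k (2M + V) · d_KS(P, Q)`. -/
theorem integral_diff_le_of_piecewise_boundedVariation
    (a b : ℝ) (hab : a < b) (k : ℕ) (hk : 1 ≤ k)
    (J : Fin k → Set ℝ)
    (hJint : ∀ s, (J s).OrdConnected)
    (hJdisj : ∀ s t : Fin k, s ≠ t → Disjoint (J s) (J t))
    (hJunion : (⋃ s, J s) = Set.Icc a b)
    (h : Fin k → ℝ → ℝ) (hmeas : ∀ s, Measurable (h s))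
    (hBV : ∀ s, BoundedVariationOn (h s) (Set.Icc a b))
    (V : ℝ) (hV : ∀ s, (eVariationOn (h s) (Set.Icc a b)).toReal ≤ V)
    (M : ℝ) (hM : ∀ s, ∀ x ∈ Set.Icc a b, |h s x| ≤ M)
    (g : ℝ → ℝ) (hg : ∀ x, g x = ∑ s : Fin k, (J s).indicator (h s) x)
    (P Q : Measure ℝ) [IsProbabilityMeasure P] [IsProbabilityMeasure Q]
    (hP : P (Set.Icc a b) = 1) (hQ : Q (Set.Icc a b) = 1) :
    |(∫ x in Set.Icc a b, g x ∂P) - ∫ x in Set.Icc a b, g x ∂Q| ≤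
      (k : ℝ) * (2 * M + V) *
        ⨆ x : ℝ, |(P (Set.Iic x)).toReal - (Q (Set.Iic x)).toReal| := by
  classical
  set D := ⨆ x : ℝ, |(P (Set.Iic x)).toReal - (Q (Set.Iic x)).toReal| with hDdef
  have hbdd : BddAbove
      (Set.range fun x : ℝ => |(P (Set.Iic x)).toReal - (Q (Set.Iic x)).toReal|) := by
    refine ⟨2, ?_⟩
    rintro _ ⟨x, rfl⟩
    have h1 := aux_toReal_prob_le_one P (Set.Iic x)
    have h2 := aux_toReal_prob_le_one Q (Set.Iic x)
    have h3 : (0:ℝ) ≤ (P (Set.Iic x)).toReal := ENNReal.toReal_nonneg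
    have h4 : (0:ℝ) ≤ (Q (Set.Iic x)).toReal := ENNReal.toReal_nonneg
    rw [abs_le]
    constructor <;> linarith
  have hD : ∀ x : ℝ, |(P (Set.Iic x)).toReal - (Q (Set.Iic x)).toReal| ≤ D := fun x =>
    le_ciSup hbdd x
  have hD' := aux_Iio_le P Q D hD
  have hPc := aux_compl_null a b P hP
  have hQc := aux_compl_null a b Q hQ
  have hJsub : ∀ s, J s ⊆ Set.Icc a b := by
    intro s x hx
    rw [← hJunion]
    exact Set.mem_iUnion.2 ⟨s, hx⟩
  have hM0 : 0 ≤ M :=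
    le_trans (abs_nonneg _) (hM ⟨0, hk⟩ a ⟨le_rfl, hab.le⟩)
  have hper : ∀ s : Fin k,
      |(∫ x in Set.Icc a b, (J s).indicator (h s) x ∂P)
        - ∫ x in Set.Icc a b, (J s).indicator (h s) x ∂Q| ≤ (2*M + V) * D := fun s =>
    aux_per_interval a b hab (J s) (hJint s) (hJsub s) (h s) (hmeas s) (hBV s) V M (hV s)
      (hM s) P Q hP hQ hPc hQc D hD hD'
  have hint : ∀ (μ : Measure ℝ) [IsFiniteMeasure μ], ∀ s : Fin k,
      Integrable (fun x => (J s).indicator (h s) x) (μ.restrict (Set.Icc a b)) := by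
    intro μ _ s
    refine Integrable.mono' (integrable_const M)
      (((hmeas s).indicator (hJint s).measurableSet).aestronglyMeasurable) ?_
    refine (ae_restrict_iff' measurableSet_Icc).2 (Filter.Eventually.of_forall fun x hx => ?_)
    rw [Real.norm_eq_abs]
    by_cases hxJ : x ∈ J s
    · rw [Set.indicator_of_mem hxJ]
      exact hM s x hx
    · rw [Set.indicator_of_notMem hxJ]
      simpa using hM0
  have hsum : ∀ (μ : Measure ℝ) [IsFiniteMeasure μ],
      (∫ x in Set.Icc a b, g x ∂μ)
        = ∑ s : Fin k, ∫ x in Set.Icc a b, (J s).indicator (h s) x ∂μ := by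
    intro μ _
    rw [setIntegral_congr_fun measurableSet_Icc (fun x _ => hg x)]
    exact integral_finset_sum Finset.univ (fun s _ => hint μ s)
  rw [hsum P, hsum Q, ← Finset.sum_sub_distrib]
  calc |∑ s : Fin k, ((∫ x in Set.Icc a b, (J s).indicator (h s) x ∂P)
          - ∫ x in Set.Icc a b, (J s).indicator (h s) x ∂Q)|
      ≤ ∑ s : Fin k, |(∫ x in Set.Icc a b, (J s).indicator (h s) x ∂P)
          - ∫ x in Set.Icc a b, (J s).indicator (h s) x ∂Q| :=
        Finset.abs_sum_le_sum_abs _ _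
    _ ≤ ∑ _s : Fin k, (2*M + V) * D := Finset.sum_le_sum (fun s _ => hper s)
    _ = (k:ℝ) * ((2*M + V) * D) := by
        rw [Finset.sum_const, Finset.card_univ, Fintype.card_fin, nsmul_eq_mul]
    _ = (k:ℝ) * (2 * M + V) * D := by ring
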